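/- Let x, y ∈ ℝ^d, β ∈ [0,1], and P ∈ ℝ^{d×d}. Then the infimum over x, y ∈ ℝ^d of ‖x−y‖² + 2(1+β)xᵀy − ‖P(x−y)‖² equals the infimum over t ≥ 0 of ((1−β)/2 − ‖P‖₂²)·t². In particular, the quadratic form (x,y) ↦ ‖x−y‖² + 2(1+β)xᵀy − ‖P(x−y)‖² is nonnegative on ℝ^d × ℝ^d if and only if ‖P‖₂² ≤ (1−β)/2. -/

import Mathlib

/-- The spectral (ℓ²-operator) norm of a square real matrix. -/
noncomputable def specNorm {d : ℕ} (A : Matrix (Fin d) (Fin d) ℝ) : ℝ :=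
  ‖Matrix.toEuclideanCLM (𝕜 := ℝ) A‖

/-- The quadratic form `(x,y) ↦ ‖x−y‖² + 2(1+β)⟪x,y⟫ − ‖P(x−y)‖²` has infimum equal to
`inf_{t ≥ 0} ((1−β)/2 − ‖P‖₂²) t²`, and is nonnegative iff `‖P‖₂² ≤ (1−β)/2`. -/
theorem stmt8 {d : ℕ} (β : ℝ) (hβ : β ∈ Set.Icc (0 : ℝ) 1)
    (P : Matrix (Fin d) (Fin d) ℝ) :
    (⨅ p : EuclideanSpace ℝ (Fin d) × EuclideanSpace ℝ (Fin d),
        (‖p.1 - p.2‖ ^ 2 + 2 * (1 + β) * (inner ℝ p.1 p.2 : ℝ)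
          - ‖Matrix.toEuclideanCLM (𝕜 := ℝ) P (p.1 - p.2)‖ ^ 2)
      = ⨅ t : {t : ℝ // 0 ≤ t}, ((1 - β) / 2 - specNorm P ^ 2) * (t : ℝ) ^ 2) ∧
    ((∀ x y : EuclideanSpace ℝ (Fin d),
        0 ≤ ‖x - y‖ ^ 2 + 2 * (1 + β) * (inner ℝ x y : ℝ)
          - ‖Matrix.toEuclideanCLM (𝕜 := ℝ) P (x - y)‖ ^ 2) ↔
      specNorm P ^ 2 ≤ (1 - β) / 2) := by
  obtain ⟨hβ0, hβ1⟩ := hβ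
  set L := Matrix.toEuclideanCLM (𝕜 := ℝ) P with hLdef
  have hspec : specNorm P = ‖L‖ := rfl
  have hhalf : (0:ℝ) ≤ (1 - β) / 2 := by linarith
  -- completing the square identity
  have hid : ∀ x y : EuclideanSpace ℝ (Fin d),
      ‖x - y‖ ^ 2 + 2 * (1 + β) * (inner ℝ x y : ℝ) - ‖L (x - y)‖ ^ 2
      = (1 + β) / 2 * ‖x + y‖ ^ 2
        + ((1 - β) / 2 * ‖x - y‖ ^ 2 - ‖L (x - y)‖ ^ 2) := by
    intro x y
    rw [norm_add_sq_real, norm_sub_sq_real x y]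
    ring
  -- value on the diagonal family
  have hval : ∀ (t : ℝ) (u : EuclideanSpace ℝ (Fin d)),
      ‖t • u - -(t • u)‖ ^ 2 + 2 * (1 + β) * (inner ℝ (t • u) (-(t • u)) : ℝ)
        - ‖L (t • u - -(t • u))‖ ^ 2
      = 4 * t ^ 2 * ((1 - β) / 2 * ‖u‖ ^ 2 - ‖L u‖ ^ 2) := by
    intro t u
    have h1 : t • u - -(t • u) = (2 * t) • u := by
      rw [sub_neg_eq_add, two_mul, add_smul]
    have h2 : (inner ℝ (t • u) (-(t • u)) : ℝ) = -(t ^ 2 * ‖u‖ ^ 2) := by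
      rw [inner_neg_right, real_inner_smul_left, real_inner_smul_right,
        real_inner_self_eq_norm_sq]
      ring
    rw [h1, h2, map_smul, norm_smul, norm_smul, Real.norm_eq_abs, mul_pow, mul_pow, sq_abs]
    ring
  -- nonnegativity from the norm bound
  have hnonneg_of : ‖L‖ ^ 2 ≤ (1 - β) / 2 → ∀ x y : EuclideanSpace ℝ (Fin d),
      0 ≤ ‖x - y‖ ^ 2 + 2 * (1 + β) * (inner ℝ x y : ℝ) - ‖L (x - y)‖ ^ 2 := by
    intro h x y
    rw [hid x y]
    have hb := L.le_opNorm (x - y)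
    have hb2 : ‖L (x - y)‖ ^ 2 ≤ ‖L‖ ^ 2 * ‖x - y‖ ^ 2 := by
      have := pow_le_pow_left₀ (norm_nonneg _) hb 2
      rwa [mul_pow] at this
    nlinarith [sq_nonneg ‖x + y‖, sq_nonneg ‖x - y‖]
  -- pointwise bound implies operator norm bound
  have hbound : (∀ u : EuclideanSpace ℝ (Fin d), ‖L u‖ ^ 2 ≤ (1 - β) / 2 * ‖u‖ ^ 2) →
      ‖L‖ ^ 2 ≤ (1 - β) / 2 := by
    intro key
    have h2 : ‖L‖ ≤ Real.sqrt ((1 - β) / 2) := by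
      apply L.opNorm_le_bound (Real.sqrt_nonneg _)
      intro u
      calc ‖L u‖ = Real.sqrt (‖L u‖ ^ 2) := (Real.sqrt_sq (norm_nonneg _)).symm
        _ ≤ Real.sqrt ((1 - β) / 2 * ‖u‖ ^ 2) := Real.sqrt_le_sqrt (key u)
        _ = Real.sqrt ((1 - β) / 2) * ‖u‖ := by
            rw [Real.sqrt_mul hhalf, Real.sqrt_sq (norm_nonneg u)]
    nlinarith [Real.sq_sqrt hhalf, Real.sqrt_nonneg ((1 - β) / 2), norm_nonneg L]
  -- the iff
  have hiff : (∀ x y : EuclideanSpace ℝ (Fin d),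
      0 ≤ ‖x - y‖ ^ 2 + 2 * (1 + β) * (inner ℝ x y : ℝ) - ‖L (x - y)‖ ^ 2) ↔
      ‖L‖ ^ 2 ≤ (1 - β) / 2 := by
    constructor
    · intro h
      apply hbound
      intro u
      have h0 := h ((1:ℝ) • u) (-((1:ℝ) • u))
      rw [hval 1 u] at h0
      nlinarith
    · exact hnonneg_of
  refine ⟨?_, by rw [hspec]; exact hiff⟩
  rw [hspec]
  rcases le_or_gt (‖L‖ ^ 2) ((1 - β) / 2) with hc | hc
  · -- both infima are 0
    have hRHS : (⨅ t : {t : ℝ // 0 ≤ t}, ((1 - β) / 2 - ‖L‖ ^ 2) * (t : ℝ) ^ 2) = 0 := by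
      apply le_antisymm
      · have hle := ciInf_le (f := fun t : {t : ℝ // 0 ≤ t} =>
            ((1 - β) / 2 - ‖L‖ ^ 2) * (t : ℝ) ^ 2)
          ⟨0, by rintro z ⟨t, rfl⟩; exact mul_nonneg (by linarith) (sq_nonneg _)⟩
          ⟨0, le_refl 0⟩
        exact hle.trans_eq (by show ((1 - β) / 2 - ‖L‖ ^ 2) * (0:ℝ) ^ 2 = 0; ring)
      · exact le_ciInf fun t => mul_nonneg (by linarith) (sq_nonneg _)
    have hLHS : (⨅ p : EuclideanSpace ℝ (Fin d) × EuclideanSpace ℝ (Fin d),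
        (‖p.1 - p.2‖ ^ 2 + 2 * (1 + β) * (inner ℝ p.1 p.2 : ℝ)
          - ‖L (p.1 - p.2)‖ ^ 2)) = 0 := by
      apply le_antisymm
      · have hle := ciInf_le (f := fun p : EuclideanSpace ℝ (Fin d) × EuclideanSpace ℝ (Fin d) =>
            (‖p.1 - p.2‖ ^ 2 + 2 * (1 + β) * (inner ℝ p.1 p.2 : ℝ) - ‖L (p.1 - p.2)‖ ^ 2))
          ⟨0, by rintro z ⟨p, rfl⟩; exact hnonneg_of hc p.1 p.2⟩
          ((0, 0) : EuclideanSpace ℝ (Fin d) × EuclideanSpace ℝ (Fin d))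
        refine hle.trans_eq ?_
        simp
      · exact le_ciInf fun p => hnonneg_of hc p.1 p.2
    rw [hLHS, hRHS]
  · -- both infima are unbounded below, hence 0 by Real.iInf convention
    have hRHS : ¬ BddBelow (Set.range fun t : {t : ℝ // 0 ≤ t} =>
        ((1 - β) / 2 - ‖L‖ ^ 2) * (t : ℝ) ^ 2) := by
      rintro ⟨b, hb⟩
      set c : ℝ := (1 - β) / 2 - ‖L‖ ^ 2 with hcdef
      have hcneg : c < 0 := by simp only [hcdef]; linarith
      have hcne : c ≠ 0 := ne_of_lt hcneg
      have htnn : (0:ℝ) ≤ Real.sqrt ((|b| + 1) / (-c)) := Real.sqrt_nonneg _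
      have hmem : b ≤ c * (Real.sqrt ((|b| + 1) / (-c))) ^ 2 :=
        hb ⟨⟨Real.sqrt ((|b| + 1) / (-c)), htnn⟩, rfl⟩
      have hsq : (Real.sqrt ((|b| + 1) / (-c))) ^ 2 = (|b| + 1) / (-c) := by
        apply Real.sq_sqrt
        apply div_nonneg (by positivity) (by linarith)
      rw [hsq] at hmem
      have hcv : c * ((|b| + 1) / (-c)) = -(|b| + 1) := by
        rw [div_neg, mul_neg, ← mul_div_assoc, mul_div_cancel_left₀ _ hcne]
      rw [hcv] at hmem
      have := neg_abs_le b
      linarith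
    have hnotall : ∃ u : EuclideanSpace ℝ (Fin d),
        (1 - β) / 2 * ‖u‖ ^ 2 - ‖L u‖ ^ 2 < 0 := by
      by_contra h
      push_neg at h
      have : ‖L‖ ^ 2 ≤ (1 - β) / 2 := hbound fun u => by linarith [h u]
      linarith
    obtain ⟨u, hu⟩ := hnotall
    have hLHS : ¬ BddBelow (Set.range fun p : EuclideanSpace ℝ (Fin d) × EuclideanSpace ℝ (Fin d) =>
        (‖p.1 - p.2‖ ^ 2 + 2 * (1 + β) * (inner ℝ p.1 p.2 : ℝ) - ‖L (p.1 - p.2)‖ ^ 2)) := by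
      rintro ⟨b, hb⟩
      set ε : ℝ := ‖L u‖ ^ 2 - (1 - β) / 2 * ‖u‖ ^ 2 with hεdef
      have hε : 0 < ε := by simp only [hεdef]; linarith
      set t : ℝ := Real.sqrt ((|b| + 1) / (4 * ε)) with htdef
      have hmem : b ≤ ‖t • u - -(t • u)‖ ^ 2
          + 2 * (1 + β) * (inner ℝ (t • u) (-(t • u)) : ℝ)
          - ‖L (t • u - -(t • u))‖ ^ 2 :=
        hb ⟨(t • u, -(t • u)), rfl⟩
      rw [hval t u] at hmem
      have hsq : t ^ 2 = (|b| + 1) / (4 * ε) := by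
        apply Real.sq_sqrt
        apply div_nonneg (by positivity) (by positivity)
      rw [hsq] at hmem
      have hεne : (4 : ℝ) * ε ≠ 0 := by positivity
      have hcv : 4 * ((|b| + 1) / (4 * ε)) * ((1 - β) / 2 * ‖u‖ ^ 2 - ‖L u‖ ^ 2)
          = -(|b| + 1) := by
        have : (1 - β) / 2 * ‖u‖ ^ 2 - ‖L u‖ ^ 2 = -ε := by simp [hεdef]
        rw [this]
        have h4 : (4:ℝ) * ε ≠ 0 := by positivity
        calc 4 * ((|b| + 1) / (4 * ε)) * -ε = -((4 * ε) * ((|b| + 1) / (4 * ε))) := by ring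
          _ = -(|b| + 1) := by rw [← mul_div_assoc, mul_div_cancel_left₀ _ h4]
      rw [hcv] at hmem
      have := neg_abs_le b
      linarith
    rw [Real.iInf_of_not_bddBelow hLHS, Real.iInf_of_not_bddBelow hRHS]
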